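/- Let γ > 0, κ > 0, τ > 0, and let L be a real m × m matrix with ‖exp(t L_κ)‖_∞ ≤ e^{−κt} for all t ≥ 0, where L_κ = L − κI. Let N : ℝ^m → ℝ^m satisfy ‖N(w)‖ ≤ κγ whenever ‖w‖ ≤ γ. Let s ≥ 1; for 1 ≤ i ≤ s and 0 ≤ j ≤ i−1 let α_{ij} ≥ 0 with Σ_{j=0}^{i−1} α_{ij} = 1, and β_{ij} ≥ 0 with β_{ij} = 0 whenever α_{ij} = 0. Let 0 = c₀ ≤ c₁ ≤ ⋯ ≤ c_s, and assume that β_{ij}/α_{ij} ≤ c_i − c_j whenever α_{ij} ≠ 0. Define the SSP-sIFRK stages by u^{(0)} = uⁿ and u^{(i)} = Σ_{j=0}^{i−1} exp((c_i − c_j) τ L_κ) (α_{ij} u^{(j)} + τ β_{ij} N(u^{(j)})) for 1 ≤ i ≤ s, and set u^{n+1} = u^{(s)}. Then if ‖uⁿ‖ ≤ γ, one has ‖u^{(i)}‖ ≤ γ for all 1 ≤ i ≤ s; in particular ‖u^{n+1}‖ ≤ γ for every τ > 0. -/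

import Mathlib

attribute [local instance] Matrix.linftyOpNormedRing Matrix.linftyOpNormedAlgebra

/-- Theorem 3.5: unconditional MBP preservation for the SSP-sIFRK method in Shu–Osher form.
With convex-combination coefficients `αᵢⱼ`, nonnegative `βᵢⱼ` vanishing when `αᵢⱼ = 0`,
nondecreasing abscissas, and `βᵢⱼ/αᵢⱼ ≤ cᵢ − cⱼ` whenever `αᵢⱼ ≠ 0`, if `‖uⁿ‖ ≤ γ` then all
stages, in particular `u^{n+1} = u^{(s)}`, are bounded by `γ` for any `τ > 0`. -/
theorem stmt_6 (m : ℕ) (γ κ τ : ℝ) (hγ : 0 < γ) (hκ : 0 < κ) (hτ : 0 < τ)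
    (L Lκ : Matrix (Fin m) (Fin m) ℝ)
    (hLκ : Lκ = L - κ • (1 : Matrix (Fin m) (Fin m) ℝ))
    (hsemi : ∀ t : ℝ, 0 ≤ t → ‖NormedSpace.exp (t • Lκ)‖ ≤ Real.exp (-κ * t))
    (N : (Fin m → ℝ) → (Fin m → ℝ))
    (hN : ∀ w : Fin m → ℝ, ‖w‖ ≤ γ → ‖N w‖ ≤ κ * γ)
    (s : ℕ) (hs : 1 ≤ s)
    (α β : ℕ → ℕ → ℝ) (c : ℕ → ℝ)
    (hα : ∀ i, 1 ≤ i → i ≤ s → ∀ j < i, 0 ≤ α i j)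
    (hαsum : ∀ i, 1 ≤ i → i ≤ s → ∑ j ∈ Finset.range i, α i j = 1)
    (hβ : ∀ i, 1 ≤ i → i ≤ s → ∀ j < i, 0 ≤ β i j)
    (hβ0 : ∀ i, 1 ≤ i → i ≤ s → ∀ j < i, α i j = 0 → β i j = 0)
    (hc0 : c 0 = 0)
    (hmono : ∀ i < s, c i ≤ c (i + 1))
    (hratio : ∀ i, 1 ≤ i → i ≤ s → ∀ j < i, α i j ≠ 0 → β i j / α i j ≤ c i - c j)
    (un : Fin m → ℝ) (hun : ‖un‖ ≤ γ)
    (u : ℕ → (Fin m → ℝ)) (hu0 : u 0 = un)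
    (hu : ∀ i, 1 ≤ i → i ≤ s →
      u i = ∑ j ∈ Finset.range i,
        (NormedSpace.exp (((c i - c j) * τ) • Lκ)).mulVec
          (α i j • u j + (τ * β i j) • N (u j))) :
    ∀ i, 1 ≤ i → i ≤ s → ‖u i‖ ≤ γ := by
  have hcle : ∀ i, i ≤ s → ∀ j, j ≤ i → c j ≤ c i := by
    intro i
    induction i with
    | zero => intro _ j hj; rw [Nat.le_zero.mp hj]
    | succ n ihn =>
      intro hns j hj
      rcases Nat.lt_succ_iff_lt_or_eq.mp (Nat.lt_succ_of_le hj) with hlt | heq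
      · exact le_trans (ihn (le_trans (Nat.le_succ n) hns) j (Nat.lt_succ_iff.mp hlt)) (hmono n (Nat.lt_of_succ_le hns))
      · rw [heq]
  intro i
  induction i using Nat.strong_induction_on with
  | _ i ih =>
    intro h1 his
    rw [hu i h1 his]
    refine le_trans (norm_sum_le _ _) (le_trans
      (Finset.sum_le_sum (g := fun j => α i j * γ) ?_) ?_)
    · intro j hj
      rw [Finset.mem_range] at hj
      have hαj := hα i h1 his j hj
      have hβj := hβ i h1 his j hj
      have huj : ‖u j‖ ≤ γ := by
        rcases Nat.eq_zero_or_pos j with h0 | hpos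
        · rw [h0, hu0]; exact hun
        · exact ih j hj hpos (le_trans (le_of_lt hj) his)
      have hNj := hN _ huj
      have hd : 0 ≤ c i - c j := sub_nonneg.2 (hcle i his j (le_of_lt hj))
      have ht : 0 ≤ (c i - c j) * τ := mul_nonneg hd hτ.le
      have hvec : ‖α i j • u j + (τ * β i j) • N (u j)‖
          ≤ α i j * γ + τ * β i j * (κ * γ) := by
        have h1' : ‖α i j • u j + (τ * β i j) • N (u j)‖
            ≤ ‖α i j • u j‖ + ‖(τ * β i j) • N (u j)‖ := norm_add_le _ _
        rw [norm_smul, norm_smul, Real.norm_eq_abs, Real.norm_eq_abs,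
          abs_of_nonneg hαj, abs_of_nonneg (mul_nonneg hτ.le hβj)] at h1'
        exact le_trans h1' (add_le_add (mul_le_mul_of_nonneg_left huj hαj)
          (mul_le_mul_of_nonneg_left hNj (mul_nonneg hτ.le hβj)))
      have hβle : β i j ≤ α i j * (c i - c j) := by
        rcases eq_or_ne (α i j) 0 with hz | hz
        · rw [hz, hβ0 i h1 his j hj hz, zero_mul]
        · have hαpos : 0 < α i j := lt_of_le_of_ne hαj (Ne.symm hz)
          have hr := hratio i h1 his j hj hz
          rw [div_le_iff₀ hαpos] at hr
          linarith
      have hexp := Real.add_one_le_exp (κ * ((c i - c j) * τ))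
      have key : Real.exp (-κ * ((c i - c j) * τ)) *
          (α i j * γ + τ * β i j * (κ * γ)) ≤ α i j * γ := by
        have h2 : α i j * γ + τ * β i j * (κ * γ)
            ≤ α i j * γ * Real.exp (κ * ((c i - c j) * τ)) := by
          nlinarith [mul_le_mul_of_nonneg_left hβle
              (by positivity : (0:ℝ) ≤ κ * τ * γ),
            mul_le_mul_of_nonneg_left hexp
              (by positivity : (0:ℝ) ≤ α i j * γ)]
        have h3 := mul_le_mul_of_nonneg_left h2
          (Real.exp_pos (-κ * ((c i - c j) * τ))).le
        have h4 : Real.exp (-κ * ((c i - c j) * τ)) *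
            Real.exp (κ * ((c i - c j) * τ)) = 1 := by
          rw [← Real.exp_add]; norm_num
        calc Real.exp (-κ * ((c i - c j) * τ)) *
            (α i j * γ + τ * β i j * (κ * γ))
            ≤ Real.exp (-κ * ((c i - c j) * τ)) *
              (α i j * γ * Real.exp (κ * ((c i - c j) * τ))) := h3
          _ = α i j * γ * (Real.exp (-κ * ((c i - c j) * τ)) *
              Real.exp (κ * ((c i - c j) * τ))) := by ring
          _ = α i j * γ := by rw [h4, mul_one]
      refine le_trans (Matrix.linfty_opNorm_mulVec _ _) (le_trans ?_ key)
      exact mul_le_mul (hsemi _ ht) hvec (norm_nonneg _) (Real.exp_pos _).le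
    · rw [← Finset.sum_mul, hαsum i h1 his, one_mul]
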